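/- Let σ ∈ (0, 1) and suppose τ_e(x) := min{τ > 0 : ‖x − G(τ)x‖ = σ‖G(τ)x‖} exists for every x ∈ ℝ² \ {0}. Assume global asymptotic stability of the sampled closed loop in the sense that for every x₀ ≠ 0 the sequence defined by x_{k+1} = G(τ_e(x_k)) x_k satisfies x_k ≠ 0 for all k and x_k → 0 as k → ∞. Then there exist x ≠ 0 and α ≠ 0 with G(τ_e(x)) x = α x (i.e., the 'angle' map has a fixed point) if and only if there exists τ > 0 with det(L(τ)) = 0 and a nonzero vector x in the null space of L(τ) with τ_e(x) = τ, where L(τ) := G(τ) − (1+σ)⁻¹ I. Moreover, in that case necessarily α = (1+σ)⁻¹. -/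
import Mathlib

open Matrix Filter

/-- The Euclidean norm of a vector in `ℝ²`. -/
noncomputable def e2norm (v : Fin 2 → ℝ) : ℝ := Real.sqrt (v 0 ^ 2 + v 1 ^ 2)

lemma e2norm_smul (c : ℝ) (v : Fin 2 → ℝ) : e2norm (c • v) = |c| * e2norm v := by
  unfold e2norm
  rw [show (c • v) 0 = c * v 0 from rfl, show (c • v) 1 = c * v 1 from rfl]
  rw [show (c * v 0)^2 + (c * v 1)^2 = c^2 * (v 0 ^2 + v 1 ^2) by ring,
    Real.sqrt_mul (sq_nonneg c), Real.sqrt_sq_eq_abs]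

lemma e2norm_pos {v : Fin 2 → ℝ} (h : v ≠ 0) : 0 < e2norm v := by
  apply Real.sqrt_pos.mpr
  rcases Function.ne_iff.mp h with ⟨i, hi⟩
  have h0 : (0:Fin 2) = ⟨0, by norm_num⟩ := rfl
  have h1 : (1:Fin 2) = ⟨1, by norm_num⟩ := rfl
  fin_cases i
  · rw [h0] at *; nlinarith [sq_nonneg (v ⟨1, by norm_num⟩), sq_abs (v ⟨0, by norm_num⟩), abs_pos.mpr hi, sq_nonneg (|v ⟨0, by norm_num⟩| - 1)]
  · rw [h1] at *; nlinarith [sq_nonneg (v ⟨0, by norm_num⟩), sq_abs (v ⟨1, by norm_num⟩), abs_pos.mpr hi, sq_nonneg (|v ⟨1, by norm_num⟩| - 1)]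

/-- Necessary and sufficient condition for the "angle" map to have a
fixed point under the relative-threshold triggering rule
`τ_e(x) = min{τ > 0 : ‖x − G(τ)x‖ = σ‖G(τ)x‖}`: assuming global asymptotic stability of
the sampled closed loop, there exist `x ≠ 0`, `α ≠ 0` with `G(τ_e(x))x = αx` iff there
is `τ > 0` with `det L(τ) = 0` and a nonzero `x` in the null space of `L(τ)` with
`τ_e(x) = τ`, where `L(τ) = G(τ) − (1+σ)⁻¹ I`; moreover necessarily `α = (1+σ)⁻¹`. -/
theorem angle_map_fixed_point_iff (σ : ℝ) (hσ : σ ∈ Set.Ioo (0 : ℝ) 1)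
    (G : ℝ → Matrix (Fin 2) (Fin 2) ℝ)
    (τe : (Fin 2 → ℝ) → ℝ)
    (hτe : ∀ x : Fin 2 → ℝ, x ≠ 0 →
      IsLeast {τ : ℝ | 0 < τ ∧
        e2norm (x - (G τ).mulVec x) = σ * e2norm ((G τ).mulVec x)} (τe x))
    (hGAS : ∀ x : ℕ → Fin 2 → ℝ, x 0 ≠ 0 →
      (∀ k : ℕ, x (k + 1) = (G (τe (x k))).mulVec (x k)) →
      (∀ k : ℕ, x k ≠ 0) ∧ Tendsto x atTop (nhds 0)) :
    ((∃ x : Fin 2 → ℝ, x ≠ 0 ∧ ∃ α : ℝ, α ≠ 0 ∧ (G (τe x)).mulVec x = α • x) ↔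
      (∃ τ : ℝ, 0 < τ ∧ (G τ - (1 + σ)⁻¹ • (1 : Matrix (Fin 2) (Fin 2) ℝ)).det = 0 ∧
        ∃ x : Fin 2 → ℝ, x ≠ 0 ∧
          (G τ - (1 + σ)⁻¹ • (1 : Matrix (Fin 2) (Fin 2) ℝ)).mulVec x = 0 ∧ τe x = τ)) ∧
    (∀ x : Fin 2 → ℝ, x ≠ 0 → ∀ α : ℝ, α ≠ 0 →
      (G (τe x)).mulVec x = α • x → α = (1 + σ)⁻¹) := by
  obtain ⟨hσ0, hσ1⟩ := hσ
  have h1σ : (0:ℝ) < 1 + σ := by linarith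
  -- τe is scale invariant
  have hscale : ∀ (c : ℝ), c ≠ 0 → ∀ x : Fin 2 → ℝ, x ≠ 0 → τe (c • x) = τe x := by
    intro c hc x hx
    have hcx : c • x ≠ 0 := smul_ne_zero hc hx
    have hset : {τ : ℝ | 0 < τ ∧
        e2norm (c • x - (G τ).mulVec (c • x)) = σ * e2norm ((G τ).mulVec (c • x))} =
        {τ : ℝ | 0 < τ ∧
        e2norm (x - (G τ).mulVec x) = σ * e2norm ((G τ).mulVec x)} := by
      ext τ
      simp only [Set.mem_setOf_eq, Matrix.mulVec_smul]
      constructor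
      · rintro ⟨h1, h2⟩
        refine ⟨h1, ?_⟩
        rw [show c • x - c • (G τ).mulVec x = c • (x - (G τ).mulVec x) by
          rw [smul_sub], e2norm_smul, e2norm_smul] at h2
        have hca : 0 < |c| := abs_pos.mpr hc
        have := h2
        field_simp at this ⊢
        nlinarith [this]
      · rintro ⟨h1, h2⟩
        refine ⟨h1, ?_⟩
        rw [show c • x - c • (G τ).mulVec x = c • (x - (G τ).mulVec x) by
          rw [smul_sub], e2norm_smul, e2norm_smul, h2]
        ring
    have H1 := hτe (c • x) hcx
    rw [hset] at H1
    exact H1.unique (hτe x hx)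
  -- key claim: necessarily α = (1+σ)⁻¹
  have key : ∀ x : Fin 2 → ℝ, x ≠ 0 → ∀ α : ℝ, α ≠ 0 →
      (G (τe x)).mulVec x = α • x → α = (1 + σ)⁻¹ := by
    intro x hx α hα hfix
    obtain ⟨⟨hτpos, heq⟩, -⟩ := hτe x hx
    rw [hfix, show x - α • x = (1 - α) • x by rw [sub_smul, one_smul],
      e2norm_smul, e2norm_smul] at heq
    have he := e2norm_pos hx
    have habs : |1 - α| = σ * |α| := by
      have := mul_right_cancel₀ (ne_of_gt he) (by linarith [heq] : |1 - α| * e2norm x = (σ * |α|) * e2norm x)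
      exact this
    -- GAS gives |α| < 1
    have hαlt : |α| < 1 := by
      set seq : ℕ → Fin 2 → ℝ := fun k => α ^ k • x with hseq
      have h0 : seq 0 ≠ 0 := by simp [hseq, hx]
      have hrec : ∀ k : ℕ, seq (k + 1) = (G (τe (seq k))).mulVec (seq k) := by
        intro k
        have hpk : α ^ k ≠ 0 := pow_ne_zero _ hα
        simp only [hseq]
        rw [hscale (α ^ k) hpk x hx, Matrix.mulVec_smul, hfix, smul_smul, ← pow_succ]
      obtain ⟨-, htend⟩ := hGAS seq h0 hrec
      rcases Function.ne_iff.mp hx with ⟨i, hi⟩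
      have hti : Tendsto (fun k => α ^ k * x i) atTop (nhds 0) := by
        have := tendsto_pi_nhds.mp htend i
        simpa [hseq] using this
      have : Tendsto (fun k => α ^ k) atTop (nhds 0) := by
        have := hti.mul_const (x i)⁻¹
        simpa [mul_assoc, mul_inv_cancel₀ hi] using this
      exact tendsto_pow_atTop_nhds_zero_iff.mp this
    -- solve |1 - α| = σ|α| with |α| < 1, α ≠ 0, 0 < σ < 1
    rcases lt_trichotomy α 0 with hneg | hz | hpos
    · exfalso
      rw [abs_of_neg hneg, abs_of_pos (by linarith : (0:ℝ) < 1 - α)] at habs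
      nlinarith
    · exact absurd hz hα
    · have hα1 : α < 1 := lt_of_abs_lt hαlt
      rw [abs_of_pos hpos, abs_of_pos (by linarith : (0:ℝ) < 1 - α)] at habs
      field_simp
      linarith
  constructor
  · constructor
    · rintro ⟨x, hx, α, hα, hfix⟩
      have hαval := key x hx α hα hfix
      refine ⟨τe x, (hτe x hx).1.1, ?_, x, hx, ?_, rfl⟩
      · apply Matrix.exists_mulVec_eq_zero_iff.mp
        refine ⟨x, hx, ?_⟩
        rw [Matrix.sub_mulVec, Matrix.smul_mulVec, Matrix.one_mulVec, hfix, hαval, sub_self]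
      · rw [Matrix.sub_mulVec, Matrix.smul_mulVec, Matrix.one_mulVec, hfix, hαval, sub_self]
    · rintro ⟨τ, hτpos, hdet, x, hx, hL, hτx⟩
      refine ⟨x, hx, (1 + σ)⁻¹, inv_ne_zero (ne_of_gt h1σ), ?_⟩
      rw [Matrix.sub_mulVec, Matrix.smul_mulVec, Matrix.one_mulVec, sub_eq_zero] at hL
      rw [hτx, hL]
  · exact key
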